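/- arXiv:2012.02758 — 2 statements merged into one kernel-verified Lean document; each statement's English description precedes it below -/
import Mathlib

section
/- If B is a Boolean subalgebra of the power set of ℕ (closed under intersection, union and complement, containing ∅ and ℕ) whose cardinality is strictly less than the splitting number 𝔰, then there exist an ultrafilter U on B and an infinite set A ⊆ ℕ such that A ∖ b is finite for every b ∈ U (i.e., A is a pseudointersection of U). -/
open Set

noncomputable section

/-- A splitting family: for every infinite `A ⊆ ℕ` some member splits `A`. -/
def IsSplittingFamily (S : Set (Set ℕ)) : Prop :=
  ∀ A : Set ℕ, A.Infinite → ∃ s ∈ S, (A ∩ s).Infinite ∧ (A \ s).Infinite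

/-- The splitting number `𝔰`: the least cardinality of a splitting family. -/
def splittingNumber : Cardinal :=
  sInf { c : Cardinal | ∃ S : Set (Set ℕ), IsSplittingFamily S ∧ Cardinal.mk S = c }

/-- An ultrafilter on a Boolean subalgebra `B` of `P(ℕ)`: a subset of `B` closed under
finite intersections, upward closed within `B`, omitting `∅`, and containing exactly
one of `b`, `ℕ ∖ b` for each `b ∈ B`. -/
def IsUltrafilterOn (B U : Set (Set ℕ)) : Prop :=
  U ⊆ B ∧
  (∀ s ∈ U, ∀ t ∈ U, s ∩ t ∈ U) ∧
  (∀ s ∈ U, ∀ t ∈ B, s ⊆ t → t ∈ U) ∧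
  ∅ ∉ U ∧
  (∀ b ∈ B, Xor' (b ∈ U) (bᶜ ∈ U))

/-- If `B` is a Boolean subalgebra of `P(ℕ)` of cardinality less than the splitting
number `𝔰`, then some ultrafilter of `B` has an infinite pseudointersection. -/
theorem stmt0 (B : Set (Set ℕ))
    (hempty : ∅ ∈ B) (huniv : Set.univ ∈ B)
    (hinter : ∀ s ∈ B, ∀ t ∈ B, s ∩ t ∈ B)
    (hunion : ∀ s ∈ B, ∀ t ∈ B, s ∪ t ∈ B)
    (hcompl : ∀ s ∈ B, sᶜ ∈ B)
    (hcard : Cardinal.mk B < splittingNumber) :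
    ∃ U : Set (Set ℕ), IsUltrafilterOn B U ∧
      ∃ A : Set ℕ, A.Infinite ∧ ∀ b ∈ U, (A \ b).Finite := by
  have hns : ¬ IsSplittingFamily B := by
    intro h
    have hmem : Cardinal.mk B ∈ { c : Cardinal | ∃ S : Set (Set ℕ), IsSplittingFamily S ∧ Cardinal.mk S = c } := ⟨B, h, rfl⟩
    exact absurd (csInf_le (OrderBot.bddBelow _) hmem) (not_le.2 hcard)
  rw [IsSplittingFamily] at hns
  push_neg at hns
  obtain ⟨A, hA, hAs⟩ := hns
  -- for each b ∈ B, A∖b is finite or A∩b is finite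
  have key : ∀ b ∈ B, (A \ b).Finite ∨ (A ∩ b).Finite := by
    intro b hb
    rcases Set.finite_or_infinite (A ∩ b) with h | h
    · exact Or.inr h
    · exact Or.inl (hAs b hb h)
  have notboth : ∀ b : Set ℕ, (A \ b).Finite → (A ∩ b).Finite → False := by
    intro b h1 h2
    have : A ⊆ (A \ b) ∪ (A ∩ b) := by
      intro x hx
      by_cases hxb : x ∈ b
      · exact Or.inr ⟨hx, hxb⟩
      · exact Or.inl ⟨hx, hxb⟩
    exact hA ((h1.union h2).subset this)
  refine ⟨{b | b ∈ B ∧ (A \ b).Finite}, ⟨?_, ?_, ?_, ?_, ?_⟩, A, hA, ?_⟩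
  · intro b hb; exact hb.1
  · rintro s ⟨hsB, hsF⟩ t ⟨htB, htF⟩
    refine ⟨hinter s hsB t htB, ?_⟩
    rw [Set.diff_inter]
    exact hsF.union htF
  · rintro s ⟨hsB, hsF⟩ t htB hst
    exact ⟨htB, hsF.subset (Set.diff_subset_diff_right hst)⟩
  · rintro ⟨-, hF⟩
    simp only [Set.diff_empty] at hF
    exact hA hF
  · intro b hb
    have h1 : A \ bᶜ = A ∩ b := by ext x; simp
    rcases key b hb with h | h
    · refine Or.inl ⟨⟨hb, h⟩, ?_⟩
      rintro ⟨-, hF⟩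
      rw [h1] at hF
      exact notboth b h hF
    · refine Or.inr ⟨⟨hcompl b hb, by rw [h1]; exact h⟩, ?_⟩
      rintro ⟨-, hF⟩
      exact notboth b hF h
  · intro b hb; exact hb.2

end
end

section
/- Let A = ⟨a_α : α < λ⟩ be a proper coherent sequence of subsets of ℕ. Then the topology τ(A) on the set of ordinals ≤ λ is compact, Hausdorff, and scattered, and each set â_β (β < λ) is a compact open subset in this topology. -/
open Set

noncomputable section

/-- The least uncountable ordinal `ω₁`. -/
def omega1 : Ordinal := (Cardinal.aleph 1).ord

/-- `⋃_{γ ∈ F} a_γ` for a finite set `F` of indices. -/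
def unionFin (a : Ordinal → Set ℕ) (F : Finset Ordinal) : Set ℕ :=
  ⋃ γ ∈ F, a γ

/-- A sequence of subsets of `ℕ`, with indices from a (downward closed) domain `D`
of ordinals, is coherent if for all `α ≤ β` in the domain there is a finite `F ⊆ α`
with `a α ∩ a β ⊆ ⋃_{γ∈F} a γ` or `a α ⊆ a β ∪ ⋃_{γ∈F} a γ`. -/
def CoherentOn (D : Set Ordinal) (a : Ordinal → Set ℕ) : Prop :=
  ∀ α β : Ordinal, α ≤ β → β ∈ D →
    ∃ F : Finset Ordinal, (∀ γ ∈ F, γ < α) ∧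
      (a α ∩ a β ⊆ unionFin a F ∨ a α ⊆ a β ∪ unionFin a F)

/-- Properness: no `a β` is contained in a finite union of earlier terms. -/
def ProperOn (D : Set Ordinal) (a : Ordinal → Set ℕ) : Prop :=
  ∀ β ∈ D, ∀ F : Finset Ordinal, (∀ γ ∈ F, γ < β) → ¬ a β ⊆ unionFin a F

/-- `â_β = { α ≤ β : a α ∖ a β ⊆ ⋃_{γ∈F} a γ for some finite F ⊆ α }`. -/
def hatA (a : Ordinal → Set ℕ) (β : Ordinal) : Set Ordinal :=
  { α | α ≤ β ∧ ∃ F : Finset Ordinal, (∀ γ ∈ F, γ < α) ∧ a α \ a β ⊆ unionFin a F }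

/-- The topology `τ(A)` on `λ + 1 = {α : α ≤ λ}` generated by the subbase
consisting of the sets `â_β` and their complements, `β < λ`. -/
def tau (lam : Ordinal) (a : Ordinal → Set ℕ) :
    TopologicalSpace {α : Ordinal // α ≤ lam} :=
  TopologicalSpace.generateFrom
    { s | ∃ β < lam, s = {x : {α : Ordinal // α ≤ lam} | x.1 ∈ hatA a β} ∨
                     s = {x : {α : Ordinal // α ≤ lam} | x.1 ∈ hatA a β}ᶜ }

/-- The subspace `ω₁ = {α : α < ω₁}` of `(ω₁+1, τ(A))`. -/
def tauSub (a : Ordinal → Set ℕ) : TopologicalSpace {y : Ordinal // y < omega1} :=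
  TopologicalSpace.induced
    (fun y : {y : Ordinal // y < omega1} => (⟨y.1, y.2.le⟩ : {α : Ordinal // α ≤ omega1}))
    (tau omega1 a)

/-- Closed unbounded subsets of `ω₁`. -/
def IsClubOmega1 (C : Set Ordinal) : Prop :=
  C ⊆ Iio omega1 ∧
  (∀ α < omega1, ∃ β ∈ C, α ≤ β) ∧
  (∀ δ, δ < omega1 → δ ≠ 0 → (∀ α < δ, ∃ β ∈ C, α < β ∧ β < δ) → δ ∈ C)

/-- Stationary subsets of `ω₁`: sets meeting every club. -/
def IsStationaryOmega1 (S : Set Ordinal) : Prop :=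
  ∀ C : Set Ordinal, IsClubOmega1 C → (S ∩ C).Nonempty

/-- The stationary covering property for a coherent sequence whose index domain is `D`:
if the sequence has length `ω₁` (i.e. `Iio ω₁ ⊆ D`), then every stationary `S ⊆ ω₁`
together with some finite `F` covers, i.e. `⋃_{γ ∈ S ∪ F} â_γ = ω₁`.  (Sequences of
length `< ω₁` have the ScP by convention.) -/
def HasScP (D : Set Ordinal) (a : Ordinal → Set ℕ) : Prop :=
  Iio omega1 ⊆ D →
    ∀ S : Set Ordinal, S ⊆ Iio omega1 → IsStationaryOmega1 S →
      ∃ F : Finset Ordinal, (⋃ γ ∈ S ∪ (↑F : Set Ordinal), hatA a γ) = Iio omega1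

/-- A node of the tree `2^{≤ω₁}`: a function `val` defined on the ordinals `< len`
(with the canonical value `false` beyond `len`). -/
structure Node where
  len : Ordinal
  val : Ordinal → Bool
  canon : ∀ α, len ≤ α → val α = false

open Classical in
/-- The restriction `x ↾ β`. -/
def Node.restrict (x : Node) (β : Ordinal) : Node where
  len := β
  val := fun α => if α < β then x.val α else false
  canon := fun α h => if_neg (not_lt.2 h)

/-- `τ.Extends σ` means `σ ⊆ τ`, i.e. `τ` extends `σ`. -/
def Node.Extends (τ σ : Node) : Prop :=
  σ.len ≤ τ.len ∧ ∀ α < σ.len, τ.val α = σ.val α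

/-- Successor ordinals. -/
def IsSucc (o : Ordinal) : Prop := ∃ β, o = β + 1

open Classical in
/-- `σ†`: if `σ` has successor length `β+1`, the node agreeing with `σ` except at `β`;
otherwise `σ` itself. -/
def Node.dagger (σ : Node) : Node :=
  if h : IsSucc σ.len then
    { len := σ.len
      val := fun α => if α = Classical.choose h then !(σ.val α) else σ.val α
      canon := by
        intro α hα
        have hs := Classical.choose_spec h
        have hne : α ≠ Classical.choose h := by
          intro he
          rw [hs, he] at hα
          rw [Ordinal.add_one_eq_succ] at hα
          exact absurd hα (not_le.2 (Order.lt_succ (Classical.choose h)))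
        show (if α = Classical.choose h then !(σ.val α) else σ.val α) = false
        rw [if_neg hne]
        exact σ.canon α hα }
  else σ

open Classical in
/-- `σ ⌢ b` : the node `σ` extended by one value `b`. -/
def Node.snoc (σ : Node) (b : Bool) : Node where
  len := σ.len + 1
  val := fun α => if α = σ.len then b else σ.val α
  canon := by
    intro α hα
    have h1 : σ.len < α := by
      have h2 : σ.len < σ.len + 1 := by
        rw [Ordinal.add_one_eq_succ]; exact Order.lt_succ σ.len
      exact lt_of_lt_of_le h2 hα
    show (if α = σ.len then b else σ.val α) = false
    rw [if_neg h1.ne']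
    exact σ.canon α h1.le

open Classical in
/-- `x ⌢ σ` : concatenation of nodes. -/
def Node.append (x σ : Node) : Node where
  len := x.len + σ.len
  val := fun α => if α < x.len then x.val α else σ.val (α - x.len)
  canon := by
    intro α hα
    have h1 : ¬ α < x.len := not_lt.2 (le_trans (le_self_add : x.len ≤ x.len + σ.len) hα)
    show (if α < x.len then x.val α else σ.val (α - x.len)) = false
    rw [if_neg h1]
    apply σ.canon
    by_contra h2
    rw [not_le] at h2
    have h3 : α ≤ x.len + (α - x.len) := Ordinal.le_add_sub α x.len
    have h4 : x.len + (α - x.len) < x.len + σ.len := add_lt_add_of_le_of_lt (le_refl x.len) h2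
    exact absurd hα (not_le.2 (lt_of_le_of_lt h3 h4))

/-- A subtree of `2^{<ω₁}` that is downward closed, twinned and has no maximal elements. -/
structure GoodTree (Γ : Set Node) : Prop where
  lt_omega1 : ∀ σ ∈ Γ, σ.len < omega1
  downward : ∀ σ ∈ Γ, ∀ β ≤ σ.len, σ.restrict β ∈ Γ
  twinned : ∀ σ ∈ Γ, σ.dagger ∈ Γ
  noMax : ∀ σ ∈ Γ, ∃ τ ∈ Γ, σ.len < τ.len ∧ τ.Extends σ

/-- `X(Γ)`: the maximal branches of `Γ`, i.e. the minimal elements of `2^{≤ω₁} ∖ Γ`. -/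
def XGamma (Γ : Set Node) : Set Node :=
  { x | x.len ≤ omega1 ∧ x ∉ Γ ∧ ∀ β < x.len, x.restrict β ∈ Γ }

/-- The index domain of the branch sequence `A_{Γ,x}`. -/
def branchDomain (Γ : Set Node) (x : Node) : Set Ordinal :=
  { α | α + 1 ≤ x.len ∧ x.restrict (α + 1) ∈ Γ }

/-- The branch sequence `A_{Γ,x}`, `a^x_α = a_{x ↾ (α+1)}`. -/
def branchSeq (a : Node → Set ℕ) (x : Node) : Ordinal → Set ℕ :=
  fun α => a (x.restrict (α + 1))

/-- A `𝕋`-algebra on the tree `Γ`. -/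
structure IsTAlgebra (Γ : Set Node) (a : Node → Set ℕ) : Prop where
  tree : GoodTree Γ
  empty_of_not_succ : ∀ σ ∈ Γ, ¬ IsSucc σ.len → a σ = ∅
  compl_dagger : ∀ σ ∈ Γ, IsSucc σ.len → a σ.dagger = (a σ)ᶜ
  branch_coherent : ∀ x : Node, x.len ≤ omega1 →
    CoherentOn (branchDomain Γ x) (branchSeq a x)
  branch_proper : ∀ x : Node, x.len ≤ omega1 →
    ProperOn (branchDomain Γ x) (branchSeq a x)

/-- The Boolean subalgebra of `P(ℕ)` generated by a family `G`. -/
inductive GenBool (G : Set (Set ℕ)) : Set ℕ → Prop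
  | basic (s : Set ℕ) : s ∈ G → GenBool G s
  | empty : GenBool G ∅
  | compl (s : Set ℕ) : GenBool G s → GenBool G sᶜ
  | inter (s t : Set ℕ) : GenBool G s → GenBool G t → GenBool G (s ∩ t)

/-- `B_Γ`: the Boolean subalgebra of `P(ℕ)` generated by `{a_σ : σ ∈ Γ}`. -/
def BGamma (Γ : Set Node) (a : Node → Set ℕ) : Set (Set ℕ) :=
  { b | GenBool { s | ∃ σ ∈ Γ, s = a σ } b }

/-- A finite intersection from the family `{ℕ ∖ a_{x↾(α+1)} : α + 1 ≤ λ_x}`. -/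
def finInterCompl (a : Node → Set ℕ) (x : Node) (F : Finset Ordinal) : Set ℕ :=
  ⋂ α ∈ F, (a (x.restrict (α + 1)))ᶜ

/-- The ultrafilter `U_x` on `B_Γ` generated by the finite intersections of
`{ℕ ∖ a_{x↾(α+1)} : α + 1 ≤ λ_x}`. -/
def Ux (Γ : Set Node) (a : Node → Set ℕ) (x : Node) : Set (Set ℕ) :=
  { b | b ∈ BGamma Γ a ∧
    ∃ F : Finset Ordinal, (∀ α ∈ F, α + 1 ≤ x.len) ∧ finInterCompl a x F ⊆ b }

/-- The Stone topology on `X(Γ)`, with subbasic open sets `{z : b ∈ U_z}`, `b ∈ B_Γ`. -/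
def stoneTop (Γ : Set Node) (a : Node → Set ℕ) :
    TopologicalSpace {z : Node // z ∈ XGamma Γ} :=
  TopologicalSpace.generateFrom
    { s | ∃ b ∈ BGamma Γ a, s = { z : {z : Node // z ∈ XGamma Γ} | b ∈ Ux Γ a z.1 } }

/-- The length-lexicographic (strict) order on finite binary strings. -/
def LenLexLT (σ τ : Node) : Prop :=
  σ.len < τ.len ∨ (σ.len = τ.len ∧ ∃ i < σ.len, σ.val i = false ∧ τ.val i = true ∧
    ∀ j < i, σ.val j = τ.val j)

/-- `e` is the standard length-lexicographic enumeration of `2^{<ω}`. -/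
def IsStdEnum (e : ℕ → Node) : Prop :=
  (∀ k, (e k).len < Ordinal.omega0) ∧
  (∀ σ : Node, σ.len < Ordinal.omega0 → ∃ k, e k = σ) ∧
  (∀ k l : ℕ, k < l → LenLexLT (e k) (e l))

/-- `⋃_{k<n} c^x_k` where `c^x_n = a^x_{e(n)} ∖ ⋃_{k<n} c^x_k` (recursively). -/
def cUnion (a : Node → Set ℕ) (x : Node) (eb : ℕ → Ordinal) : ℕ → Set ℕ
  | 0 => ∅
  | n + 1 => cUnion a x eb n ∪ (a (x.restrict (eb n + 1)) \ cUnion a x eb n)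

/-- `c^x_n = a^x_{e(n)} ∖ ⋃_{k<n} c^x_k`. -/
def cSeq (a : Node → Set ℕ) (x : Node) (eb : ℕ → Ordinal) (n : ℕ) : Set ℕ :=
  a (x.restrict (eb n + 1)) \ cUnion a x eb n

/-- `{x ⌢ σ : σ ∈ 2^{<ω}}`. -/
def appendSet (x : Node) : Set Node :=
  { τ | ∃ σ : Node, σ.len < Ordinal.omega0 ∧ τ = x.append σ }

/-- The defining equations of the extension `A_Γ[π,x]`:
`a_x = ∅`, `a_{x⌢(σ⌢0)} = ⋃{c^x_k : σ⌢1 ⊆ σ_{π(k)}}`, `a_{x⌢(σ⌢1)} = ℕ ∖ a_{x⌢(σ⌢0)}`. -/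
def ExtEquations (e : ℕ → Node) (π : ℕ → ℕ) (a : Node → Set ℕ) (x : Node)
    (eb : ℕ → Ordinal) (a' : Node → Set ℕ) : Prop :=
  a' x = ∅ ∧
  ∀ σ : Node, σ.len < Ordinal.omega0 →
    (a' (x.append (σ.snoc false)) =
      ⋃ k ∈ { k : ℕ | (e (π k)).Extends (σ.snoc true) }, cSeq a x eb k) ∧
    (a' (x.append (σ.snoc true)) = (a' (x.append (σ.snoc false)))ᶜ)

/-- The full tree `2^{<ω₁}`. -/
def GammaFull : Set Node := { σ | σ.len < omega1 }

theorem natLtOmega1 (n : ℕ) : (n : Ordinal) < omega1 := by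
  have h1 : (n : Ordinal) < Ordinal.omega0 := Ordinal.nat_lt_omega0 n
  have h2 : Ordinal.omega0 < omega1 := by
    rw [omega1, ← Cardinal.ord_aleph0]
    exact Cardinal.ord_lt_ord.2 (by rw [← Cardinal.aleph_zero]
                                    exact Cardinal.aleph_lt_aleph.2 zero_lt_one)
  exact h1.trans h2


section Helpers

open TopologicalSpace

variable {a : Ordinal → Set ℕ}

/-- `s` is small over `δ`: covered by finitely many `a γ`, `γ < δ`. -/
def Sm (a : Ordinal → Set ℕ) (δ : Ordinal) (s : Set ℕ) : Prop :=
  ∃ F : Finset Ordinal, (∀ γ ∈ F, γ < δ) ∧ s ⊆ unionFin a F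

lemma mem_unionFin {F : Finset Ordinal} {x : ℕ} :
    x ∈ unionFin a F ↔ ∃ γ ∈ F, x ∈ a γ := by
  simp [unionFin]

lemma Sm.mono {δ : Ordinal} {s t : Set ℕ} (h : s ⊆ t) (ht : Sm a δ t) : Sm a δ s := by
  obtain ⟨F, hF, hsub⟩ := ht
  exact ⟨F, hF, h.trans hsub⟩

lemma Sm.union {δ : Ordinal} {s t : Set ℕ} (hs : Sm a δ s) (ht : Sm a δ t) :
    Sm a δ (s ∪ t) := by
  obtain ⟨F, hF, h1⟩ := hs
  obtain ⟨G, hG, h2⟩ := ht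
  refine ⟨F ∪ G, ?_, ?_⟩
  · intro γ hγ
    rcases Finset.mem_union.1 hγ with h | h
    exacts [hF γ h, hG γ h]
  · intro x hx
    rcases hx with hx | hx
    · obtain ⟨γ, hγ, hxγ⟩ := mem_unionFin.1 (h1 hx)
      exact mem_unionFin.2 ⟨γ, Finset.mem_union_left _ hγ, hxγ⟩
    · obtain ⟨γ, hγ, hxγ⟩ := mem_unionFin.1 (h2 hx)
      exact mem_unionFin.2 ⟨γ, Finset.mem_union_right _ hγ, hxγ⟩

lemma sm_single {δ γ : Ordinal} (h : γ < δ) {s : Set ℕ} (hs : s ⊆ a γ) : Sm a δ s := by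
  refine ⟨{γ}, ?_, ?_⟩
  · intro x hx
    rw [Finset.mem_singleton] at hx
    subst hx; exact h
  · intro x hx
    exact mem_unionFin.2 ⟨γ, Finset.mem_singleton_self γ, hs hx⟩

lemma sm_empty {δ : Ordinal} : Sm a δ (∅ : Set ℕ) :=
  ⟨∅, fun γ h => absurd h (Finset.notMem_empty γ), by simp⟩

lemma sm_biUnion {δ : Ordinal} {f : Ordinal → Set ℕ} (F : Finset Ordinal)
    (h : ∀ γ ∈ F, Sm a δ (f γ)) : Sm a δ (⋃ γ ∈ F, f γ) := by
  classical
  induction F using Finset.induction_on with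
  | empty => exact sm_empty.mono (by simp)
  | insert b s hx ih =>
    have : (⋃ γ ∈ insert b s, f γ) = f b ∪ ⋃ γ ∈ s, f γ := by
      simp [Set.biUnion_insert]
    rw [this]
    exact (h b (Finset.mem_insert_self b s)).union
      (ih fun γ hγ => h γ (Finset.mem_insert_of_mem hγ))

lemma mem_hatA_self (a : Ordinal → Set ℕ) (β : Ordinal) : β ∈ hatA a β :=
  ⟨le_rfl, ∅, fun γ h => absurd h (Finset.notMem_empty γ), by simp⟩

variable {lam : Ordinal}

lemma not_sm_inter (hprop : ProperOn (Iio lam) a) {α β : Ordinal}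
    (hαl : α < lam) (hαβ : α ∈ hatA a β) : ¬ Sm a α (a α ∩ a β) := by
  intro hsm
  obtain ⟨-, F, hF, hsub⟩ := hαβ
  have hall : Sm a α (a α) := by
    refine (Sm.union (⟨F, hF, hsub⟩ : Sm a α (a α \ a β)) hsm).mono ?_
    intro x hx
    by_cases h : x ∈ a β
    · exact Or.inr ⟨hx, h⟩
    · exact Or.inl ⟨hx, h⟩
  obtain ⟨G, hG, hsubG⟩ := hall
  exact hprop α hαl G hG hsubG

lemma sm_inter_of_not_mem (hcoh : CoherentOn (Iio lam) a) {α β : Ordinal}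
    (hαβ : α ≤ β) (hβl : β < lam) (h : α ∉ hatA a β) : Sm a α (a α ∩ a β) := by
  obtain ⟨F, hF, hor⟩ := hcoh α β hαβ hβl
  rcases hor with h1 | h1
  · exact ⟨F, hF, h1⟩
  · exact absurd ⟨hαβ, F, hF, fun x hx => (h1 hx.1).resolve_left hx.2⟩ h

lemma exists_mem_hatA (hcoh : CoherentOn (Iio lam) a) {α γ : Ordinal} (hαl : α < lam)
    (F : Finset Ordinal) (hFl : ∀ δ ∈ F, δ < lam)
    (hbig : ¬ Sm a α (a α ∩ a γ)) {c : Set ℕ} (hc : Sm a α c)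
    (hcover : a α ∩ a γ ⊆ c ∪ unionFin a F) : ∃ δ ∈ F, α ∈ hatA a δ := by
  by_contra hcon
  push_neg at hcon
  apply hbig
  have hsm : ∀ δ ∈ F, Sm a α (a α ∩ a δ) := by
    intro δ hδ
    rcases lt_or_ge δ α with h | h
    · exact sm_single h Set.inter_subset_right
    · exact sm_inter_of_not_mem hcoh h (hFl δ hδ) (hcon δ hδ)
  refine (hc.union (sm_biUnion F hsm)).mono ?_
  intro x hx
  rcases hcover hx with h | h
  · exact Or.inl h
  · obtain ⟨δ, hδ, hxδ⟩ := mem_unionFin.1 h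
    exact Or.inr (Set.mem_biUnion hδ ⟨hx.1, hxδ⟩)

/-- Key lemma, case 1: if `γ ∈ â_β` then `â_γ ∖ â_β` is covered by finitely many
`â_δ` with `δ < γ`. -/
lemma hat_diff_subset (hcoh : CoherentOn (Iio lam) a) (hprop : ProperOn (Iio lam) a)
    {β γ : Ordinal} (hγl : γ < lam) (hβl : β < lam) (hγβ : γ ∈ hatA a β) :
    ∃ D : Finset Ordinal, (∀ δ ∈ D, δ < γ) ∧
      ∀ α, α ∈ hatA a γ → α ∉ hatA a β → ∃ δ ∈ D, α ∈ hatA a δ := by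
  obtain ⟨hγβle, F, hF, hFsub⟩ := hγβ
  refine ⟨F, hF, fun α hαγ hαβ => ?_⟩
  have hαγle : α ≤ γ := hαγ.1
  have hαl : α < lam := lt_of_le_of_lt hαγle hγl
  have hbig := not_sm_inter hprop hαl hαγ
  have hc : Sm a α (a α ∩ a β) := sm_inter_of_not_mem hcoh (hαγle.trans hγβle) hβl hαβ
  refine exists_mem_hatA hcoh hαl F (fun δ hδ => (hF δ hδ).trans hγl) hbig hc ?_
  intro x hx
  by_cases hb : x ∈ a β
  · exact Or.inl ⟨hx.1, hb⟩
  · exact Or.inr (hFsub ⟨hx.2, hb⟩)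

/-- Key lemma, case 2: if `γ ∉ â_η` then `â_γ ∩ â_η` is covered by finitely many
`â_δ` with `δ < γ`. -/
lemma hat_inter_subset (hcoh : CoherentOn (Iio lam) a) (hprop : ProperOn (Iio lam) a)
    {γ η : Ordinal} (hγl : γ < lam) (hηl : η < lam) (hγη : γ ∉ hatA a η) :
    ∃ D : Finset Ordinal, (∀ δ ∈ D, δ < γ) ∧
      ∀ α, α ∈ hatA a γ → α ∈ hatA a η → ∃ δ ∈ D, α ∈ hatA a δ := by
  rcases lt_or_ge η γ with h | h
  · refine ⟨{η}, ?_, fun α _ hαη => ⟨η, Finset.mem_singleton_self η, hαη⟩⟩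
    intro δ hδ
    rw [Finset.mem_singleton] at hδ
    subst hδ; exact h
  · obtain ⟨F, hF, hFsub⟩ := sm_inter_of_not_mem hcoh h hηl hγη
    refine ⟨F, hF, fun α hαγ hαη => ?_⟩
    have hαl : α < lam := lt_of_le_of_lt hαγ.1 hγl
    obtain ⟨hαηle, G, hG, hGsub⟩ := hαη
    refine exists_mem_hatA hcoh hαl F (fun δ hδ => (hF δ hδ).trans hγl)
      (not_sm_inter hprop hαl hαγ) (⟨G, hG, hGsub⟩ : Sm a α (a α \ a η)) ?_
    intro x hx
    by_cases hb : x ∈ a η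
    · exact Or.inr (hFsub ⟨hx.2, hb⟩)
    · exact Or.inl ⟨hx.1, hb⟩

/-- The subbasic set `â_β` viewed in the space `λ + 1`. -/
def hatX (lam : Ordinal) (a : Ordinal → Set ℕ) (β : Ordinal) :
    Set {α : Ordinal // α ≤ lam} :=
  {x | x.1 ∈ hatA a β}

/-- The subbase generating `τ(A)`. -/
def subb (lam : Ordinal) (a : Ordinal → Set ℕ) : Set (Set {α : Ordinal // α ≤ lam}) :=
  { s | ∃ β < lam, s = hatX lam a β ∨ s = (hatX lam a β)ᶜ }

lemma tau_eq (lam : Ordinal) (a : Ordinal → Set ℕ) :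
    tau lam a = TopologicalSpace.generateFrom (subb lam a) := rfl

lemma isOpen_hatX {β : Ordinal} (hβ : β < lam) :
    @IsOpen _ (tau lam a) (hatX lam a β) :=
  isOpen_generateFrom_of_mem ⟨β, hβ, Or.inl rfl⟩

lemma isOpen_hatXc {β : Ordinal} (hβ : β < lam) :
    @IsOpen _ (tau lam a) (hatX lam a β)ᶜ :=
  isOpen_generateFrom_of_mem ⟨β, hβ, Or.inr rfl⟩

/-- Single-step covering estimate for a subbasic set containing the point `γ`. -/
lemma stepG (hcoh : CoherentOn (Iio lam) a) (hprop : ProperOn (Iio lam) a)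
    {γ : Ordinal} (hγl : γ < lam) {s : Set {α : Ordinal // α ≤ lam}}
    (hs : s ∈ subb lam a) (hxs : (⟨γ, hγl.le⟩ : {α : Ordinal // α ≤ lam}) ∈ s) :
    ∃ D : Finset Ordinal, (∀ δ ∈ D, δ < γ) ∧
      hatX lam a γ \ s ⊆ ⋃ δ ∈ D, hatX lam a δ := by
  obtain ⟨β, hβl, hc | hc⟩ := hs
  · subst hc
    obtain ⟨D, hD, hmain⟩ := hat_diff_subset hcoh hprop hγl hβl hxs
    refine ⟨D, hD, fun x hx => ?_⟩
    obtain ⟨δ, hδ, hmem⟩ := hmain x.1 hx.1 hx.2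
    exact Set.mem_biUnion hδ hmem
  · subst hc
    obtain ⟨D, hD, hmain⟩ := hat_inter_subset hcoh hprop hγl hβl hxs
    refine ⟨D, hD, fun x hx => ?_⟩
    obtain ⟨δ, hδ, hmem⟩ := hmain x.1 hx.1 (by simpa [hatX] using hx.2)
    exact Set.mem_biUnion hδ hmem

/-- Single-step covering estimate for a subbasic set containing the point `λ`. -/
lemma stepG_top {s : Set {α : Ordinal // α ≤ lam}}
    (hs : s ∈ subb lam a) (hxs : (⟨lam, le_rfl⟩ : {α : Ordinal // α ≤ lam}) ∈ s) :
    ∃ D : Finset Ordinal, (∀ δ ∈ D, δ < lam) ∧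
      (Set.univ : Set {α : Ordinal // α ≤ lam}) \ s ⊆ ⋃ δ ∈ D, hatX lam a δ := by
  obtain ⟨β, hβl, hc | hc⟩ := hs
  · subst hc
    exact absurd ((hxs : lam ∈ hatA a β).1.trans_lt hβl) (lt_irrefl lam)
  · subst hc
    refine ⟨{β}, ?_, ?_⟩
    · intro δ hδ
      rw [Finset.mem_singleton] at hδ
      subst hδ; exact hβl
    · intro x hx
      have : x ∈ hatX lam a β := by simpa using hx.2
      exact Set.mem_biUnion (Finset.mem_singleton_self β) this

/-- Covering estimate for a finite intersection of subbasic sets containing a point. -/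
lemma claimG {P : Ordinal → Prop} (K : Set {α : Ordinal // α ≤ lam})
    (p : {α : Ordinal // α ≤ lam})
    (hstep : ∀ s ∈ subb lam a, p ∈ s → ∃ D : Finset Ordinal,
      (∀ δ ∈ D, P δ) ∧ K \ s ⊆ ⋃ δ ∈ D, hatX lam a δ)
    {f : Set (Set {α : Ordinal // α ≤ lam})} (hfin : f.Finite)
    (hfsub : f ⊆ subb lam a) (hp : p ∈ ⋂₀ f) :
    ∃ D : Finset Ordinal, (∀ δ ∈ D, P δ) ∧ K \ ⋂₀ f ⊆ ⋃ δ ∈ D, hatX lam a δ := by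
  classical
  have h : ∀ s (hs : s ∈ f), ∃ D : Finset Ordinal,
      (∀ δ ∈ D, P δ) ∧ K \ s ⊆ ⋃ δ ∈ D, hatX lam a δ :=
    fun s hs => hstep s (hfsub hs) (hp s hs)
  choose g hg1 hg2 using h
  refine ⟨hfin.toFinset.attach.biUnion
    (fun s => g s.1 (hfin.mem_toFinset.1 s.2)), ?_, ?_⟩
  · intro δ hδ
    obtain ⟨s, -, hδ2⟩ := Finset.mem_biUnion.1 hδ
    exact hg1 _ _ δ hδ2
  · intro x hx
    have : ∃ s ∈ f, x ∉ s := by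
      by_contra hcon
      push_neg at hcon
      exact hx.2 fun s hs => hcon s hs
    obtain ⟨s, hs, hxs⟩ := this
    obtain ⟨δ, hδ, hmem⟩ := Set.mem_iUnion₂.1 (hg2 s hs ⟨hx.1, hxs⟩)
    refine Set.mem_biUnion ?_ hmem
    exact Finset.mem_biUnion.2 ⟨⟨s, hfin.mem_toFinset.2 hs⟩, Finset.mem_attach _ _, hδ⟩

/-- Assembly: a closed set covered, outside one open set of the cover, by finitely
many compact sets has a finite subcover. -/
lemma subcover_aux {X : Type*} [TopologicalSpace X] {ι : Type*} (U : ι → Set X)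
    (hU : ∀ i, IsOpen (U i)) {K : Set X} (hK : IsClosed K) (hcov : K ⊆ ⋃ i, U i)
    (i₀ : ι) {D : Finset Ordinal} {hat : Ordinal → Set X}
    (hsub : K \ U i₀ ⊆ ⋃ δ ∈ D, hat δ) (hDc : ∀ δ ∈ D, IsCompact (hat δ)) :
    ∃ T : Finset ι, K ⊆ ⋃ i ∈ T, U i := by
  classical
  have hC : IsCompact (⋃ δ ∈ D, hat δ ∩ K) :=
    D.isCompact_biUnion fun δ hδ => (hDc δ hδ).inter_right hK
  have hCcov : (⋃ δ ∈ D, hat δ ∩ K) ⊆ ⋃ i, U i := by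
    intro x hx
    obtain ⟨δ, hδ, hmem⟩ := Set.mem_iUnion₂.1 hx
    exact hcov hmem.2
  obtain ⟨T₁, hT₁⟩ := hC.elim_finite_subcover U hU hCcov
  refine ⟨insert i₀ T₁, fun x hx => ?_⟩
  by_cases h : x ∈ U i₀
  · exact Set.mem_biUnion (Finset.mem_insert_self i₀ T₁) h
  · obtain ⟨δ, hδ, hmem⟩ := Set.mem_iUnion₂.1 (hsub ⟨hx, h⟩)
    obtain ⟨i, hi, hmem2⟩ := Set.mem_iUnion₂.1 (hT₁ (Set.mem_biUnion hδ ⟨hmem, hx⟩))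
    exact Set.mem_biUnion (Finset.mem_insert_of_mem hi) hmem2

/-- Every `â_γ` is compact in `τ(A)`. -/
lemma isCompact_hatX (hcoh : CoherentOn (Iio lam) a) (hprop : ProperOn (Iio lam) a) :
    ∀ γ, γ < lam → @IsCompact _ (tau lam a) (hatX lam a γ) := by
  intro γ
  induction γ using Ordinal.induction with
  | _ γ IH =>
    intro hγl
    letI : TopologicalSpace {α : Ordinal // α ≤ lam} := tau lam a
    apply isCompact_of_finite_subcover
    intro ι U hU hcov
    have hself : (⟨γ, hγl.le⟩ : {α : Ordinal // α ≤ lam}) ∈ hatX lam a γ :=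
      mem_hatA_self a γ
    obtain ⟨i₀, hi₀⟩ := Set.mem_iUnion.1 (hcov hself)
    have hbasis := TopologicalSpace.isTopologicalBasis_of_subbasis (tau_eq lam a)
    obtain ⟨v, ⟨f, ⟨hfin, hfsub⟩, rfl⟩, hxv, hvU⟩ :=
      hbasis.exists_subset_of_mem_open hi₀ (hU i₀)
    obtain ⟨D, hD, hsub⟩ := claimG (P := fun δ => δ < γ) (hatX lam a γ) _
      (fun s hs hps => stepG hcoh hprop hγl hs hps) hfin hfsub hxv
    have hK : IsClosed (hatX lam a γ) := isOpen_compl_iff.1 (isOpen_hatXc hγl)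
    refine subcover_aux U hU hK hcov i₀ (fun x hx => ?_)
      (fun δ hδ => IH δ (hD δ hδ) ((hD δ hδ).trans hγl))
    exact hsub ⟨hx.1, fun hv => hx.2 (hvU hv)⟩

/-- The whole space is compact. -/
lemma isCompact_univX (hcoh : CoherentOn (Iio lam) a) (hprop : ProperOn (Iio lam) a) :
    @IsCompact _ (tau lam a) (Set.univ : Set {α : Ordinal // α ≤ lam}) := by
  letI : TopologicalSpace {α : Ordinal // α ≤ lam} := tau lam a
  apply isCompact_of_finite_subcover
  intro ι U hU hcov
  obtain ⟨i₀, hi₀⟩ := Set.mem_iUnion.1 (hcov (Set.mem_univ ⟨lam, le_rfl⟩))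
  have hbasis := TopologicalSpace.isTopologicalBasis_of_subbasis (tau_eq lam a)
  obtain ⟨v, ⟨f, ⟨hfin, hfsub⟩, rfl⟩, hxv, hvU⟩ :=
    hbasis.exists_subset_of_mem_open hi₀ (hU i₀)
  obtain ⟨D, hD, hsub⟩ := claimG (P := fun δ => δ < lam) Set.univ _
    (fun s hs hps => stepG_top hs hps) hfin hfsub hxv
  refine subcover_aux U hU isClosed_univ hcov i₀ (fun x hx => ?_)
    (fun δ hδ => isCompact_hatX hcoh hprop δ (hD δ hδ))
  exact hsub ⟨hx.1, fun hv => hx.2 (hvU hv)⟩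

end Helpers


/-- For a proper coherent sequence `A = ⟨a_α : α < λ⟩`, the topology `τ(A)` on
`λ + 1` is compact, Hausdorff and scattered, and each `â_β` (`β < λ`) is a compact
open subset. -/
theorem stmt1 (lam : Ordinal) (a : Ordinal → Set ℕ)
    (hcoh : CoherentOn (Iio lam) a) (hprop : ProperOn (Iio lam) a) :
    @CompactSpace {α : Ordinal // α ≤ lam} (tau lam a) ∧
    @T2Space {α : Ordinal // α ≤ lam} (tau lam a) ∧
    (∀ Y : Set {α : Ordinal // α ≤ lam}, Y.Nonempty →
      ∃ y ∈ Y, ∃ U : Set {α : Ordinal // α ≤ lam},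
        @IsOpen _ (tau lam a) U ∧ U ∩ Y = {y}) ∧
    (∀ β < lam,
      @IsCompact _ (tau lam a) {x : {α : Ordinal // α ≤ lam} | x.1 ∈ hatA a β} ∧
      @IsOpen _ (tau lam a) {x : {α : Ordinal // α ≤ lam} | x.1 ∈ hatA a β}) := by
  refine ⟨?_, ?_, ?_, ?_⟩
  · exact @CompactSpace.mk _ (tau lam a) (isCompact_univX hcoh hprop)
  · letI : TopologicalSpace {α : Ordinal // α ≤ lam} := tau lam a
    have key : ∀ x y : {α : Ordinal // α ≤ lam}, x.1 < y.1 →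
        ∃ u v : Set {α : Ordinal // α ≤ lam},
          IsOpen u ∧ IsOpen v ∧ x ∈ u ∧ y ∈ v ∧ Disjoint u v := by
      intro x y h
      have hxl : x.1 < lam := lt_of_lt_of_le h y.2
      refine ⟨hatX lam a x.1, (hatX lam a x.1)ᶜ, isOpen_hatX hxl, isOpen_hatXc hxl,
        mem_hatA_self a x.1, ?_, disjoint_compl_right⟩
      intro hy
      exact absurd (hy : y.1 ∈ hatA a x.1).1 (not_le.2 h)
    refine ⟨fun x y hxy => ?_⟩
    rcases lt_trichotomy x.1 y.1 with h | h | h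
    · exact key x y h
    · exact absurd (Subtype.ext h) hxy
    · obtain ⟨u, v, hu, hv, hyu, hxv, hd⟩ := key y x h
      exact ⟨v, u, hv, hu, hxv, hyu, hd.symm⟩
  · intro Y hY
    letI : TopologicalSpace {α : Ordinal // α ≤ lam} := tau lam a
    obtain ⟨m, hmY, hmin⟩ := Ordinal.lt_wf.has_min (Subtype.val '' Y) (hY.image _)
    obtain ⟨y, hyY, rfl⟩ := hmY
    by_cases hml : y.1 < lam
    · refine ⟨y, hyY, hatX lam a y.1, isOpen_hatX hml, ?_⟩
      apply Set.eq_singleton_iff_unique_mem.2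
      refine ⟨⟨mem_hatA_self a y.1, hyY⟩, ?_⟩
      intro z hz
      have h1 : z.1 ≤ y.1 := (hz.1 : z.1 ∈ hatA a y.1).1
      have h2 : ¬ z.1 < y.1 := hmin z.1 ⟨z, hz.2, rfl⟩
      exact Subtype.ext (le_antisymm h1 (not_lt.1 h2))
    · refine ⟨y, hyY, Set.univ, isOpen_univ, ?_⟩
      apply Set.eq_singleton_iff_unique_mem.2
      refine ⟨⟨Set.mem_univ y, hyY⟩, ?_⟩
      intro z hz
      have hy : y.1 = lam := le_antisymm y.2 (not_lt.1 hml)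
      have h1 : z.1 ≤ y.1 := le_trans z.2 (le_of_eq hy.symm)
      have h2 : ¬ z.1 < y.1 := hmin z.1 ⟨z, hz.2, rfl⟩
      exact Subtype.ext (le_antisymm h1 (not_lt.1 h2))
  · intro β hβ
    exact ⟨isCompact_hatX hcoh hprop β hβ, isOpen_hatX hβ⟩

end
end
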